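/- Let M0 < M be two real numbers, let Q0 ⊆ R^{m+1} be a polyhedron in variables (x,z) whose height is M, and let Qx ⊆ R^m be a polytope containing the set {x : ∃ z > M0 with (x,z) ∈ Q0} in its relative interior. Then every (x̄, z̄) ∈ Q0 satisfies: if x̄ ∈ relint(Qx) then z̄ ≤ M, and otherwise z̄ ≤ M0 − (d(x̄, Qx)/diam(Qx))·(M − M0). -/

import Mathlib

/-- **Lemma `LEM:QinR`.** If `Q0 ⊆ ℝ^m × ℝ` is a polyhedron of height `M`
and `Qx` is a polytope (of dimension ≥ 1) containing `{x : ∃ z > M0, (x,z) ∈ Q0}` in its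
relative interior, then `Q0 ⊆ R(Qx, M, M0)`. -/
theorem stmt_5 {m : ℕ} (M0 M : ℝ) (hM : M0 < M)
    (Q0 : Set (EuclideanSpace ℝ (Fin m) × ℝ))
    (hQ0poly : ∃ (n : ℕ) (A : Fin n → (EuclideanSpace ℝ (Fin m) × ℝ) →ₗ[ℝ] ℝ)
      (b : Fin n → ℝ), Q0 = {z | ∀ i, b i ≤ A i z})
    (hub : ∀ p ∈ Q0, p.2 ≤ M) (hach : ∃ p ∈ Q0, p.2 = M)
    (Qx : Set (EuclideanSpace ℝ (Fin m)))
    (V : Finset (EuclideanSpace ℝ (Fin m))) (hQx : Qx = convexHull ℝ (V : Set _))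
    (hdim : ∃ a ∈ Qx, ∃ b ∈ Qx, a ≠ b)
    (hcontain : {x | ∃ z, M0 < z ∧ (x, z) ∈ Q0} ⊆ intrinsicInterior ℝ Qx) :
    ∀ p ∈ Q0,
      (p.1 ∈ intrinsicInterior ℝ Qx → p.2 ≤ M) ∧
      (p.1 ∉ intrinsicInterior ℝ Qx →
        p.2 ≤ M0 - (Metric.infDist p.1 Qx / Metric.diam Qx) * (M - M0)) := by
  classical
  obtain ⟨q, hq, hqM⟩ := hach
  -- convexity of Q0
  have hconv : Convex ℝ Q0 := by
    obtain ⟨n, A, b, rfl⟩ := hQ0poly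
    intro x hx y hy a c ha hc hac i
    have h1 : a * b i ≤ a * A i x := mul_le_mul_of_nonneg_left (hx i) ha
    have h2 : c * b i ≤ c * A i y := mul_le_mul_of_nonneg_left (hy i) hc
    have : A i (a • x + c • y) = a * A i x + c * A i y := by
      simp [map_add, map_smul, smul_eq_mul]
    rw [this]
    calc b i = a * b i + c * b i := by rw [← add_mul, hac, one_mul]
      _ ≤ a * A i x + c * A i y := add_le_add h1 h2
  have hcomp : IsCompact Qx := hQx ▸ V.finite_toSet.isCompact_convexHull (𝕜 := ℝ)
  have hclosed : IsClosed Qx := hcomp.isClosed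
  have hbdd := hcomp.isBounded
  obtain ⟨a, ha, b', hb', hab⟩ := hdim
  have hdiam : 0 < Metric.diam Qx := by
    have h1 : dist a b' ≤ Metric.diam Qx := Metric.dist_le_diam_of_mem hbdd ha hb'
    have h2 : 0 < dist a b' := dist_pos.2 hab
    linarith
  have hq1 : q.1 ∈ intrinsicInterior ℝ Qx :=
    hcontain ⟨q.2, by rw [hqM]; exact hM, by simpa using hq⟩
  intro p hp
  refine ⟨fun _ => hub p hp, fun hnot => ?_⟩
  have hpM0 : p.2 ≤ M0 := by
    by_contra h
    push_neg at h
    exact hnot (hcontain ⟨p.2, h, by simpa using hp⟩)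
  set t : ℝ := (M - M0) / (M - p.2) with ht
  have hMp : 0 < M - p.2 := by linarith
  have ht0 : 0 < t := div_pos (by linarith) hMp
  have ht1 : t ≤ 1 := by rw [div_le_one hMp]; linarith
  have htM : t * (M - p.2) = M - M0 := div_mul_cancel₀ _ (ne_of_gt hMp)
  -- points strictly before time t are in Qx
  have hseg : ∀ s : ℝ, 0 ≤ s → s < t → ((1 - s) • q.1 + s • p.1) ∈ Qx := by
    intro s hs0 hst
    have hs1 : s ≤ 1 := le_trans hst.le ht1
    have hmem : (1 - s) • q + s • p ∈ Q0 := hconv hq hp (by linarith) hs0 (by ring)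
    have hfst : ((1 - s) • q + s • p).1 = (1 - s) • q.1 + s • p.1 := rfl
    have hsnd : ((1 - s) • q + s • p).2 = (1 - s) * M + s * p.2 := by
      simp [Prod.smul_def, smul_eq_mul, hqM]
    have hz : M0 < (1 - s) * M + s * p.2 := by
      have : s * (M - p.2) < t * (M - p.2) := by
        exact mul_lt_mul_of_pos_right hst hMp
      rw [htM] at this
      nlinarith
    refine intrinsicInterior_subset (hcontain ⟨(1 - s) * M + s * p.2, hz, ?_⟩)
    have : ((1 - s) • q.1 + s • p.1, (1 - s) * M + s * p.2) = (1 - s) • q + s • p := by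
      exact Prod.ext hfst.symm hsnd.symm
    rw [this]
    exact hmem
  -- the point at time t is in Qx by closedness
  have hxstar : ((1 - t) • q.1 + t • p.1) ∈ Qx := by
    rw [← hclosed.closure_eq]
    have hcont : Filter.Tendsto (fun s : ℝ => (1 - s) • q.1 + s • p.1)
        (nhdsWithin t (Set.Iio t)) (nhds ((1 - t) • q.1 + t • p.1)) := by
      apply Filter.Tendsto.mono_left _ nhdsWithin_le_nhds
      exact Continuous.tendsto
        (((continuous_const.sub continuous_id).smul continuous_const).add
          (continuous_id.smul continuous_const)) t
    refine mem_closure_of_tendsto hcont ?_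
    filter_upwards [Ioo_mem_nhdsLT_of_mem (Set.mem_Ioc.mpr ⟨ht0, le_refl t⟩)] with s hs
    exact hseg s hs.1.le hs.2
  -- distance estimates
  have hq1' : q.1 ∈ Qx := intrinsicInterior_subset hq1
  have heq1 : dist ((1 - t) • q.1 + t • p.1) q.1 = t * dist p.1 q.1 := by
    rw [dist_eq_norm, dist_eq_norm]
    have h : (1 - t) • q.1 + t • p.1 - q.1 = t • (p.1 - q.1) := by module
    rw [h, norm_smul, Real.norm_eq_abs, abs_of_pos ht0]
  have heq2 : dist p.1 ((1 - t) • q.1 + t • p.1) = (1 - t) * dist p.1 q.1 := by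
    rw [dist_eq_norm, dist_eq_norm]
    have h : p.1 - ((1 - t) • q.1 + t • p.1) = (1 - t) • (p.1 - q.1) := by module
    rw [h, norm_smul, Real.norm_eq_abs, abs_of_nonneg (by linarith : (0:ℝ) ≤ 1 - t)]
  have htr : t * dist p.1 q.1 ≤ Metric.diam Qx := by
    rw [← heq1]
    exact Metric.dist_le_diam_of_mem hbdd hxstar hq1'
  have hinf : Metric.infDist p.1 Qx ≤ (1 - t) * dist p.1 q.1 := by
    rw [← heq2]
    exact Metric.infDist_le_dist_of_mem hxstar
  have hinf0 : 0 ≤ Metric.infDist p.1 Qx := Metric.infDist_nonneg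
  have h1 : Metric.infDist p.1 Qx * t ≤ (1 - t) * Metric.diam Qx := by
    calc Metric.infDist p.1 Qx * t ≤ ((1 - t) * dist p.1 q.1) * t :=
          mul_le_mul_of_nonneg_right hinf ht0.le
      _ = (1 - t) * (t * dist p.1 q.1) := by ring
      _ ≤ (1 - t) * Metric.diam Qx :=
          mul_le_mul_of_nonneg_left htr (by linarith)
  have hkey : (1 - t) * (M - p.2) = M0 - p.2 := by
    rw [sub_mul, one_mul, htM]; ring
  have hgoal : Metric.infDist p.1 Qx * (M - M0) ≤ (M0 - p.2) * Metric.diam Qx := by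
    calc Metric.infDist p.1 Qx * (M - M0)
        = (Metric.infDist p.1 Qx * t) * (M - p.2) := by rw [← htM]; ring
      _ ≤ ((1 - t) * Metric.diam Qx) * (M - p.2) :=
          mul_le_mul_of_nonneg_right h1 hMp.le
      _ = ((1 - t) * (M - p.2)) * Metric.diam Qx := by ring
      _ = (M0 - p.2) * Metric.diam Qx := by rw [hkey]
  have hfin : Metric.infDist p.1 Qx / Metric.diam Qx * (M - M0) ≤ M0 - p.2 := by
    rw [div_mul_eq_mul_div, div_le_iff₀ hdiam]
    exact hgoal
  linarith
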